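/- For every even n ≥ 4, M(F_cy, D_3, n) ≤ (n−1)·(n−3)!; that is, any family of Hamilton cycles of K_n in which the union of any two distinct members has a vertex of degree 3 has at most (n−1)·(n−3)! members. -/

import Mathlib

/-- The edge set of the Hamilton cycle of the complete graph on `Fin n` that visits
the vertices cyclically in the order `σ 0, σ 1, …, σ (n-1), σ 0`. -/
def hamCycleEdges (n : ℕ) (σ : Equiv.Perm (Fin n)) : Finset (Sym2 (Fin n)) :=
  Finset.univ.image (fun i : Fin n =>
    s(σ i, σ ⟨((i : ℕ) + 1) % n, Nat.mod_lt _ i.pos⟩))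

/-- `E` is the edge set of a Hamilton cycle of the complete graph on `Fin n`. -/
def IsHamCycle (n : ℕ) (E : Finset (Sym2 (Fin n))) : Prop :=
  ∃ σ : Equiv.Perm (Fin n), E = hamCycleEdges n σ

/-- The degree of the vertex `v` in the graph on `Fin n` with edge set `E`. -/
def degIn (n : ℕ) (E : Finset (Sym2 (Fin n))) (v : Fin n) : ℕ :=
  (E.filter (fun e => v ∈ e)).card

namespace Stmt8
open Finset Equiv
open Fin.CommRing
variable (t : ℕ)
local instance : NeZero (2*t+4) := ⟨by omega⟩
local instance : NeZero (2*t+3) := ⟨by omega⟩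

lemma index_succ (i : Fin (2*t+4)) :
    (⟨((i:ℕ)+1) % (2*t+4), Nat.mod_lt _ i.pos⟩ : Fin (2*t+4)) = i + 1 := by
  apply Fin.ext
  simp [Fin.add_def, Fin.val_one']

lemma ham_eq (σ : Perm (Fin (2*t+4))) :
    hamCycleEdges (2*t+4) σ = Finset.univ.image (fun i => s(σ i, σ (i+1))) := by
  unfold hamCycleEdges
  apply Finset.image_congr
  intro i _
  simp only [index_succ]

lemma map_ham (σ τ : Perm (Fin (2*t+4))) :
    (hamCycleEdges (2*t+4) τ).image (Sym2.map σ) = hamCycleEdges (2*t+4) (σ * τ) := by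
  rw [ham_eq, ham_eq, Finset.image_image]
  apply Finset.image_congr
  intro i _
  simp [Equiv.Perm.mul_apply]

noncomputable def sh (a : Fin (2*t+4)) (b : Bool) : Perm (Fin (2*t+4)) :=
  Equiv.ofBijective (fun i => if b then a + i else a - i) (by
    apply Finite.injective_iff_bijective.1
    intro i j h
    cases b <;> simpa using h)

@[simp] lemma sh_apply (a : Fin (2*t+4)) (b : Bool) (i : Fin (2*t+4)) :
    sh t a b i = if b then a + i else a - i := rfl

lemma ham_sh (π : Perm (Fin (2*t+4))) (a : Fin (2*t+4)) (b : Bool) :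
    hamCycleEdges (2*t+4) (π * sh t a b) = hamCycleEdges (2*t+4) π := by
  rw [ham_eq, ham_eq]
  ext x
  simp only [Finset.mem_image, Finset.mem_univ, true_and, Equiv.Perm.mul_apply, sh_apply]
  cases b with
  | true =>
    simp only [↓reduceIte]
    constructor
    · rintro ⟨i, rfl⟩
      exact ⟨a + i, by rw [show a + (i+1) = (a+i)+1 by ring]⟩
    · rintro ⟨j, rfl⟩
      exact ⟨j - a, by rw [show a + (j-a) = j by ring, show a + (j-a+1) = j+1 by ring]⟩
  | false =>
    simp only [Bool.false_eq_true, ↓reduceIte]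
    constructor
    · rintro ⟨i, rfl⟩
      refine ⟨a - i - 1, ?_⟩
      rw [Sym2.eq_swap, show a - (i+1) = a-i-1 by ring, show a-i-1+1 = a - i by ring]
    · rintro ⟨j, rfl⟩
      refine ⟨a - j - 1, ?_⟩
      rw [Sym2.eq_swap, show a - (a-j-1) = j+1 by ring, show a-(a-j-1+1) = j by ring]

lemma two_ne_zero' : (2 : Fin (2*t+4)) ≠ 0 := by
  intro h
  have := congrArg Fin.val h
  simp [Fin.val_two] at this
  rw [Nat.mod_eq_of_lt (by omega)] at this
  omega

lemma one_ne_zero' : (1 : Fin (2*t+4)) ≠ 0 := by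
  intro h
  have := congrArg Fin.val h
  simp [Fin.val_one'] at this

lemma edge_inj (σ : Perm (Fin (2*t+4))) :
    Function.Injective (fun i : Fin (2*t+4) => s(σ i, σ (i+1))) := by
  intro i j h
  simp only [Sym2.eq_iff] at h
  rcases h with ⟨h1, _⟩ | ⟨h1, h2⟩
  · exact σ.injective h1
  · have e1 : i = j + 1 := σ.injective h1
    have e2 : i + 1 = j := σ.injective h2
    exfalso
    apply two_ne_zero' t
    have h3 : j + 1 + 1 = j := by rw [← e1, e2]
    have h2' : j + 2 = j + 0 := by
      rw [add_zero]
      calc j + 2 = j + 1 + 1 := by ring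
        _ = j := h3
    exact add_left_cancel h2'

lemma deg_ham (σ : Perm (Fin (2*t+4))) (v : Fin (2*t+4)) :
    degIn (2*t+4) (hamCycleEdges (2*t+4) σ) v = 2 := by
  unfold degIn
  rw [ham_eq, Finset.filter_image]
  rw [Finset.card_image_of_injective _ (edge_inj t σ)]
  have : Finset.univ.filter (fun i : Fin (2*t+4) => v ∈ s(σ i, σ (i+1)))
      = {σ⁻¹ v, σ⁻¹ v - 1} := by
    ext i
    simp only [Finset.mem_filter, Finset.mem_univ, true_and, Sym2.mem_iff,
      Finset.mem_insert, Finset.mem_singleton]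
    constructor
    · rintro (h | h)
      · left; rw [h]; simp
      · right
        have : i + 1 = σ⁻¹ v := by rw [h]; simp
        rw [← this]; ring
    · rintro (rfl | rfl)
      · left; simp
      · right; rw [show σ⁻¹ v - 1 + 1 = σ⁻¹ v by ring]; simp
  rw [this]
  rw [Finset.card_pair]
  intro h
  apply one_ne_zero' t
  have h2' : σ⁻¹ v - 1 + 1 = σ⁻¹ v - 1 + 0 := by
    rw [add_zero]
    calc σ⁻¹ v - 1 + 1 = σ⁻¹ v := by ring
      _ = σ⁻¹ v - 1 := h
  exact add_left_cancel h2'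

lemma degIn_union (E₁ E₂ : Finset (Sym2 (Fin (2*t+4)))) (h : Disjoint E₁ E₂)
    (v : Fin (2*t+4)) :
    degIn (2*t+4) (E₁ ∪ E₂) v = degIn (2*t+4) E₁ v + degIn (2*t+4) E₂ v := by
  unfold degIn
  rw [Finset.filter_union]
  exact Finset.card_union_of_disjoint (Finset.disjoint_filter_filter h)

/-! ### The Walecki-type family of pairwise edge-disjoint Hamilton cycles -/

lemma zmod_cast_inj {a b : ℕ} (ha : a < 2*t+3) (hb : b < 2*t+3)
    (h : (a : ZMod (2*t+3)) = (b : ZMod (2*t+3))) : a = b := by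
  have := congrArg ZMod.val h
  rwa [ZMod.val_cast_of_lt ha, ZMod.val_cast_of_lt hb] at this

def iota (a : ZMod (2*t+3)) : Fin (2*t+4) := ⟨a.val, by have := ZMod.val_lt a; omega⟩

def last' : Fin (2*t+4) := ⟨2*t+3, by omega⟩

lemma iota_ne_last (a : ZMod (2*t+3)) : iota t a ≠ last' t := by
  intro h
  have := congrArg Fin.val h
  simp only [iota, last'] at this
  have := ZMod.val_lt a
  omega

lemma iota_inj : Function.Injective (iota t) := by
  intro a b h
  have := congrArg Fin.val h
  simp only [iota] at this
  exact ZMod.val_injective _ this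

def w (i : ℕ) : ZMod (2*t+3) :=
  if i % 2 = 0 then ((i/2 : ℕ) : ZMod (2*t+3)) else -((i/2 : ℕ) : ZMod (2*t+3))

lemma w_inj {a b : ℕ} (ha1 : 1 ≤ a) (ha2 : a ≤ 2*t+3) (hb1 : 1 ≤ b) (hb2 : b ≤ 2*t+3)
    (h : w t a = w t b) : a = b := by
  unfold w at h
  by_cases hpa : a % 2 = 0 <;> by_cases hpb : b % 2 = 0 <;>
    simp only [hpa, hpb, if_true, if_false] at h
  · have := zmod_cast_inj t (by omega) (by omega) h
    omega
  · exfalso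
    have hz : ((a/2 + b/2 : ℕ) : ZMod (2*t+3)) = 0 := by push_cast; rw [h]; ring
    rw [ZMod.natCast_eq_zero_iff] at hz
    have := Nat.le_of_dvd (by omega) hz
    omega
  · exfalso
    have hz : ((a/2 + b/2 : ℕ) : ZMod (2*t+3)) = 0 := by push_cast; rw [← h]; ring
    rw [ZMod.natCast_eq_zero_iff] at hz
    have := Nat.le_of_dvd (by omega) hz
    omega
  · have := zmod_cast_inj t (by omega) (by omega) (neg_injective h)
    omega

def g (k : ZMod (2*t+3)) (i : Fin (2*t+4)) : Fin (2*t+4) :=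
  if i = 0 then last' t else iota t (k + w t i.val)

lemma g_inj (k : ZMod (2*t+3)) : Function.Injective (g t k) := by
  intro i j h
  unfold g at h
  by_cases hi : i = 0 <;> by_cases hj : j = 0
  · rw [hi, hj]
  · rw [if_pos hi, if_neg hj] at h
    exact absurd h.symm (iota_ne_last t _)
  · rw [if_neg hi, if_pos hj] at h
    exact absurd h (iota_ne_last t _)
  · rw [if_neg hi, if_neg hj] at h
    have h2 := add_left_cancel (iota_inj t h)
    have hi1 : 1 ≤ (i : ℕ) := by
      rcases Nat.eq_zero_or_pos (i : ℕ) with h0 | h0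
      · exact absurd (Fin.ext h0) hi
      · exact h0
    have hj1 : 1 ≤ (j : ℕ) := by
      rcases Nat.eq_zero_or_pos (j : ℕ) with h0 | h0
      · exact absurd (Fin.ext h0) hj
      · exact h0
    exact Fin.ext (w_inj t hi1 (by omega) hj1 (by omega) h2)

noncomputable def G (k : ZMod (2*t+3)) : Perm (Fin (2*t+4)) :=
  Equiv.ofBijective (g t k) (Finite.injective_iff_bijective.1 (g_inj t k))

@[simp] lemma G_apply (k : ZMod (2*t+3)) (i : Fin (2*t+4)) : G t k i = g t k i := rfl

def pre (x : Fin (2*t+4)) : ZMod (2*t+3) := ((x.val : ℕ) : ZMod (2*t+3))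

lemma pre_iota (a : ZMod (2*t+3)) : pre t (iota t a) = a := by
  simp only [pre, iota]
  exact ZMod.natCast_rightInverse a

noncomputable def phi : Sym2 (Fin (2*t+4)) → ZMod (2*t+3) ⊕ ZMod (2*t+3) :=
  Sym2.lift ⟨fun a b =>
    if a = last' t then .inl (pre t b)
    else if b = last' t then .inl (pre t a)
    else .inr (pre t a + pre t b), by
      intro a b
      by_cases ha : a = last' t <;> by_cases hb : b = last' t <;>
        simp [ha, hb, add_comm]⟩

lemma phi_last_left (b : Fin (2*t+4)) : phi t s(last' t, b) = .inl (pre t b) := by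
  simp [phi]

lemma phi_last_right (a : ZMod (2*t+3)) :
    phi t s(iota t a, last' t) = .inl a := by
  simp [phi, iota_ne_last, pre_iota]

lemma phi_two (a b : ZMod (2*t+3)) :
    phi t s(iota t a, iota t b) = .inr (a + b) := by
  simp [phi, iota_ne_last, pre_iota]

lemma g_zero (k : ZMod (2*t+3)) : g t k 0 = last' t := if_pos rfl

lemma g_ne (k : ZMod (2*t+3)) (i : Fin (2*t+4)) (h : i ≠ 0) :
    g t k i = iota t (k + w t i.val) := if_neg h

lemma val_add_one (i : Fin (2*t+4)) (h : (i : ℕ) < 2*t+3) :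
    ((i + 1 : Fin (2*t+4)) : ℕ) = (i : ℕ) + 1 := by
  rw [Fin.add_def]
  simp only [Fin.val_one']
  rw [Nat.mod_eq_of_lt (show 1 < 2*t+4 by omega)]
  exact Nat.mod_eq_of_lt (by omega)

lemma phi_edge (k : ZMod (2*t+3)) (i : Fin (2*t+4)) :
    phi t (s(g t k i, g t k (i+1)))
      = .inl k ∨ phi t (s(g t k i, g t k (i+1))) = .inl (k - ((t+1 : ℕ) : ZMod (2*t+3)))
      ∨ phi t (s(g t k i, g t k (i+1))) = .inr (k + k)
      ∨ phi t (s(g t k i, g t k (i+1))) = .inr (k + k + 1) := by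
  by_cases h0 : i = 0
  · left
    subst h0
    have h1 : (0 + 1 : Fin (2*t+4)) ≠ 0 := by
      rw [zero_add]; exact one_ne_zero' t
    rw [g_zero, g_ne t k _ h1, phi_last_left, pre_iota]
    have : ((0 + 1 : Fin (2*t+4)) : ℕ) = 1 := by
      rw [zero_add, Fin.val_one']
      exact Nat.mod_eq_of_lt (by omega)
    rw [this]
    have hw : w t 1 = 0 := by simp [w]
    rw [hw, add_zero]
  · by_cases hlast : (i : ℕ) = 2*t+3
    · right; left
      have hip : i + 1 = 0 := by
        apply Fin.ext
        rw [Fin.add_def]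
        simp only [Fin.val_one', hlast, Fin.val_zero]
        rw [Nat.mod_eq_of_lt (show 1 < 2*t+4 by omega)]
        rw [show 2*t+3+1 = 2*t+4 by omega, Nat.mod_self]
      rw [hip, g_zero, g_ne t k i h0, phi_last_right]
      have hw : w t (i : ℕ) = -((t+1 : ℕ) : ZMod (2*t+3)) := by
        rw [hlast]
        simp only [w]
        rw [if_neg (by omega : ¬(2*t+3) % 2 = 0), show (2*t+3)/2 = t+1 by omega]
      rw [hw, sub_eq_add_neg]
    · have hi1 : 1 ≤ (i : ℕ) := by
        rcases Nat.eq_zero_or_pos (i : ℕ) with h | h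
        · exact absurd (Fin.ext h) h0
        · exact h
      have hi2 : (i : ℕ) < 2*t+3 := by
        have := i.isLt
        omega
      have hs : ((i + 1 : Fin (2*t+4)) : ℕ) = (i : ℕ) + 1 := val_add_one t i hi2
      have h1 : i + 1 ≠ 0 := by
        intro h
        rw [h] at hs
        simp at hs
      rw [g_ne t k i h0, g_ne t k _ h1, phi_two, hs]
      by_cases hp : (i : ℕ) % 2 = 0
      · right; right; left
        have e1 : w t (i : ℕ) = (((i:ℕ)/2 : ℕ) : ZMod (2*t+3)) := if_pos hp
        have e2 : w t ((i:ℕ)+1) = -((((i:ℕ)+1)/2 : ℕ) : ZMod (2*t+3)) := by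
          have : ¬((i:ℕ)+1) % 2 = 0 := by omega
          exact if_neg this
        have e3 : ((i:ℕ)+1)/2 = (i:ℕ)/2 := by omega
        rw [e1, e2, e3]
        ring
      · right; right; right
        have e1 : w t (i : ℕ) = -(((i:ℕ)/2 : ℕ) : ZMod (2*t+3)) := if_neg hp
        have e2 : w t ((i:ℕ)+1) = ((((i:ℕ)+1)/2 : ℕ) : ZMod (2*t+3)) := by
          have : ((i:ℕ)+1) % 2 = 0 := by omega
          exact if_pos this
        have e3 : ((i:ℕ)+1)/2 = (i:ℕ)/2 + 1 := by omega
        rw [e1, e2, e3]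
        push_cast
        ring

def K (c : Fin (t+1)) : ZMod (2*t+3) := ((c : ℕ) : ZMod (2*t+3))

noncomputable def HH (c : Fin (t+1)) : Finset (Sym2 (Fin (2*t+4))) :=
  hamCycleEdges (2*t+4) (G t (K t c))

lemma HH_disj {c c' : Fin (t+1)} (hne : c ≠ c') : Disjoint (HH t c) (HH t c') := by
  have hc : (c : ℕ) ≤ t := Fin.is_le c
  have hc' : (c' : ℕ) ≤ t := Fin.is_le c'
  have hcc : (c : ℕ) ≠ (c' : ℕ) := fun h => hne (Fin.ext h)
  rw [Finset.disjoint_left]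
  intro e he he'
  rw [HH, ham_eq, Finset.mem_image] at he he'
  obtain ⟨i, -, rfl⟩ := he
  obtain ⟨j, -, hej⟩ := he'
  have h1 := phi_edge t (K t c) i
  have h2 := phi_edge t (K t c') j
  simp only [G_apply] at hej
  rw [hej] at h2
  have hb1 : (c : ℕ) < 2*t+3 := by omega
  have hb2 : (c' : ℕ) < 2*t+3 := by omega
  rcases h1 with h1 | h1 | h1 | h1 <;> rcases h2 with h2 | h2 | h2 | h2 <;>
      rw [h1] at h2 <;>
      simp only [Sum.inl.injEq, Sum.inr.injEq, reduceCtorEq] at h2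
  · exact hcc (zmod_cast_inj t hb1 hb2 h2)
  · have hB : (((c:ℕ) + (t+1) : ℕ) : ZMod (2*t+3)) = (((c':ℕ) : ℕ) : ZMod (2*t+3)) := by
      push_cast
      unfold K at h2
      push_cast at h2
      linear_combination h2
    have := zmod_cast_inj t (by omega) (by omega) hB
    omega
  · have hB : (((c:ℕ) : ℕ) : ZMod (2*t+3)) = (((c':ℕ) + (t+1) : ℕ) : ZMod (2*t+3)) := by
      push_cast
      unfold K at h2
      push_cast at h2
      linear_combination h2
    have := zmod_cast_inj t (by omega) (by omega) hB
    omega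
  · have hB : K t c = K t c' := by linear_combination h2
    exact hcc (zmod_cast_inj t hb1 hb2 hB)
  · have hB : ((2*(c:ℕ) : ℕ) : ZMod (2*t+3)) = ((2*(c':ℕ) : ℕ) : ZMod (2*t+3)) := by
      push_cast
      unfold K at h2
      linear_combination h2
    have := zmod_cast_inj t (by omega) (by omega) hB
    omega
  · have hB : ((2*(c:ℕ) : ℕ) : ZMod (2*t+3)) = ((2*(c':ℕ)+1 : ℕ) : ZMod (2*t+3)) := by
      push_cast
      unfold K at h2
      linear_combination h2
    have := zmod_cast_inj t (by omega) (by omega) hB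
    omega
  · have hB : ((2*(c:ℕ)+1 : ℕ) : ZMod (2*t+3)) = ((2*(c':ℕ) : ℕ) : ZMod (2*t+3)) := by
      push_cast
      unfold K at h2
      linear_combination h2
    have := zmod_cast_inj t (by omega) (by omega) hB
    omega
  · have hB : ((2*(c:ℕ) : ℕ) : ZMod (2*t+3)) = ((2*(c':ℕ) : ℕ) : ZMod (2*t+3)) := by
      push_cast
      unfold K at h2
      linear_combination h2
    have := zmod_cast_inj t (by omega) (by omega) hB
    omega

lemma HH_ne {c c' : Fin (t+1)} (h : c ≠ c') : HH t c ≠ HH t c' := by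
  intro he
  have hd := HH_disj t h
  rw [he, disjoint_self] at hd
  have hne : (HH t c').Nonempty := by
    rw [HH, ham_eq]
    exact Finset.univ_nonempty.image _
  rw [hd] at hne
  exact Finset.not_nonempty_empty hne

/-! ### The double counting argument -/

lemma main (F : Finset (Finset (Sym2 (Fin (2*t+4)))))
    (hF : ∀ E ∈ F, IsHamCycle (2*t+4) E)
    (hdeg : ∀ E₁ ∈ F, ∀ E₂ ∈ F, E₁ ≠ E₂ →
      ∃ v : Fin (2*t+4), degIn (2*t+4) (E₁ ∪ E₂) v = 3) :
    F.card ≤ (2*t+3) * Nat.factorial (2*t+1) := by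
  classical
  set P : Perm (Fin (2*t+4)) → Finset (Sym2 (Fin (2*t+4))) → Prop :=
    fun σ C => ∃ c : Fin (t+1), C = (HH t c).image (Sym2.map σ) with hP
  -- Lower bound for each cycle in F
  have key2 : ∀ C ∈ F, (2*t+4)*(2*t+2) ≤ (univ.filter (fun σ => P σ C)).card := by
    intro C hC
    obtain ⟨τ, hCe⟩ := hF C hC
    have hmaps : ∀ (c : Fin (t+1)) (a : Fin (2*t+4)) (b : Bool),
        C = (HH t c).image (Sym2.map (τ * sh t a b * (G t (K t c))⁻¹)) := by
      intro c a b
      rw [HH, map_ham]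
      have hg : τ * sh t a b * (G t (K t c))⁻¹ * G t (K t c) = τ * sh t a b := by
        group
      rw [hg, ham_sh, hCe]
    have hcard := Finset.card_le_card_of_injOn
      (f := fun p : Fin (t+1) × Fin (2*t+4) × Bool =>
        τ * sh t p.2.1 p.2.2 * (G t (K t p.1))⁻¹)
      (s := Finset.univ) (t := univ.filter (fun σ => P σ C)) ?_ ?_
    · calc (2*t+4)*(2*t+2)
          = Fintype.card (Fin (t+1) × Fin (2*t+4) × Bool) := by
            simp only [Fintype.card_prod, Fintype.card_fin, Fintype.card_bool]
            ring
        _ = (Finset.univ : Finset (Fin (t+1) × Fin (2*t+4) × Bool)).card := by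
            rw [Finset.card_univ]
        _ ≤ _ := hcard
    · -- maps into the filter
      rintro ⟨c, a, b⟩ -
      rw [Finset.mem_coe, Finset.mem_filter]
      exact ⟨Finset.mem_univ _, ⟨c, hmaps c a b⟩⟩
    · -- injectivity
      rintro ⟨c, a, b⟩ - ⟨c', a', b'⟩ - h
      simp only at h
      have hcc : c = c' := by
        by_contra hne
        have h1 := hmaps c a b
        have h2 := hmaps c' a' b'
        rw [h] at h1
        rw [h1] at h2
        have := Finset.image_injective
          (Sym2.map.injective (τ * sh t a' b' * (G t (K t c'))⁻¹).injective) h2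
        exact HH_ne t hne this
      subst hcc
      have hsh : sh t a b = sh t a' b' := by
        have := mul_right_cancel h
        exact mul_left_cancel this
      have h0 := DFunLike.congr_fun hsh 0
      have h1 := DFunLike.congr_fun hsh 1
      simp only [sh_apply] at h0 h1
      have haa : a = a' := by
        cases b <;> cases b' <;> simpa using h0
      subst haa
      have hbb : b = b' := by
        cases b <;> cases b' <;> simp at h1 ⊢
        · -- b = false, b' = true : a - 1 = a + 1
          exfalso
          apply two_ne_zero' t
          have h2' : a + 2 = a + 0 := by
            rw [add_zero]
            calc a + 2 = (a + 1) + 1 := by ring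
              _ = (a - 1) + 1 := by rw [← h1]
              _ = a := by ring
          exact add_left_cancel h2'
        · exfalso
          apply two_ne_zero' t
          have h2' : a + 2 = a + 0 := by
            rw [add_zero]
            calc a + 2 = (a + 1) + 1 := by ring
              _ = (a - 1) + 1 := by rw [h1]
              _ = a := by ring
          exact add_left_cancel h2'
      rw [hbb]
  -- Upper bound for each permutation
  have key1 : ∀ σ : Perm (Fin (2*t+4)), (F.filter (fun C => P σ C)).card ≤ 1 := by
    intro σ
    rw [Finset.card_le_one]
    intro C hC C' hC'
    rw [Finset.mem_filter] at hC hC'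
    obtain ⟨hCF, c, hCe⟩ := hC
    obtain ⟨hC'F, c', hC'e⟩ := hC'
    by_contra hne
    have hcc : c ≠ c' := by
      rintro rfl
      exact hne (hCe.trans hC'e.symm)
    have hd : Disjoint C C' := by
      rw [hCe, hC'e]
      exact (Finset.disjoint_image (Sym2.map.injective σ.injective)).2 (HH_disj t hcc)
    obtain ⟨v, hv⟩ := hdeg C hCF C' hC'F hne
    have hCham : C = hamCycleEdges (2*t+4) (σ * G t (K t c)) := by
      rw [hCe, HH, map_ham]
    have hC'ham : C' = hamCycleEdges (2*t+4) (σ * G t (K t c')) := by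
      rw [hC'e, HH, map_ham]
    rw [degIn_union t _ _ hd, hCham, hC'ham, deg_ham, deg_ham] at hv
    exact absurd hv (by norm_num)
  -- Double counting
  have count : ∑ C ∈ F, (univ.filter (fun σ => P σ C)).card
      = ∑ σ : Perm (Fin (2*t+4)), (F.filter (fun C => P σ C)).card := by
    simp_rw [Finset.card_filter]
    exact Finset.sum_comm
  have lb : F.card * ((2*t+4)*(2*t+2)) ≤ ∑ C ∈ F, (univ.filter (fun σ => P σ C)).card := by
    calc F.card * ((2*t+4)*(2*t+2)) = ∑ _C ∈ F, (2*t+4)*(2*t+2) := by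
          rw [Finset.sum_const, smul_eq_mul]
      _ ≤ _ := Finset.sum_le_sum key2
  have ub : ∑ σ : Perm (Fin (2*t+4)), (F.filter (fun C => P σ C)).card
      ≤ Nat.factorial (2*t+4) := by
    calc ∑ σ : Perm (Fin (2*t+4)), (F.filter (fun C => P σ C)).card
        ≤ ∑ _σ : Perm (Fin (2*t+4)), 1 := Finset.sum_le_sum (fun σ _ => key1 σ)
      _ = Fintype.card (Perm (Fin (2*t+4))) := by
          rw [Finset.sum_const, smul_eq_mul, mul_one, Finset.card_univ]
      _ = Nat.factorial (2*t+4) := by rw [Fintype.card_perm, Fintype.card_fin]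
  have big : F.card * ((2*t+4)*(2*t+2)) ≤ Nat.factorial (2*t+4) := by
    calc F.card * ((2*t+4)*(2*t+2)) ≤ _ := lb
      _ = _ := count
      _ ≤ _ := ub
  have fact : Nat.factorial (2*t+4) = ((2*t+3) * Nat.factorial (2*t+1)) * ((2*t+4)*(2*t+2)) := by
    have f4 : Nat.factorial (2*t+4) = (2*t+4) * Nat.factorial (2*t+3) := by
      rw [show 2*t+4 = (2*t+3)+1 by omega, Nat.factorial_succ]
    have f3 : Nat.factorial (2*t+3) = (2*t+3) * Nat.factorial (2*t+2) := by
      rw [show 2*t+3 = (2*t+2)+1 by omega, Nat.factorial_succ]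
    have f2 : Nat.factorial (2*t+2) = (2*t+2) * Nat.factorial (2*t+1) := by
      rw [show 2*t+2 = (2*t+1)+1 by omega, Nat.factorial_succ]
    rw [f4, f3, f2]
    ring
  rw [fact] at big
  exact Nat.le_of_mul_le_mul_right big (by positivity)

end Stmt8

theorem stmt8 (n : ℕ) (hn : 4 ≤ n) (heven : Even n)
    (F : Finset (Finset (Sym2 (Fin n))))
    (hF : ∀ E ∈ F, IsHamCycle n E)
    (hdeg : ∀ E₁ ∈ F, ∀ E₂ ∈ F, E₁ ≠ E₂ → ∃ v : Fin n, degIn n (E₁ ∪ E₂) v = 3) :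
    F.card ≤ (n - 1) * Nat.factorial (n - 3) := by
  obtain ⟨t, rfl⟩ : ∃ t, n = 2*t+4 := by
    obtain ⟨s, hs⟩ := heven
    exact ⟨(n-4)/2, by omega⟩
  rw [show 2*t+4-1 = 2*t+3 by omega, show 2*t+4-3 = 2*t+1 by omega]
  exact Stmt8.main t F hF hdeg
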